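/- arXiv:2007.13089 — 7 statements merged into one kernel-verified Lean document; each statement's English description precedes it below -/
import Mathlib

section
/- Let C be a category and let F : C ⥤ D be a functor admitting a right adjoint G : D ⥤ C. If the composite G ∘ F is an equivalence of categories (more precisely, if the monad GF is isomorphic as a functor to an equivalence, or just: GF is an equivalence), then F is fully faithful. -/
open CategoryTheory

/-- If `F ⊣ G` and the composite `G ∘ F` (i.e. `F ⋙ G : C ⥤ C`) is an equivalence of
categories, then `F` is fully faithful. -/
theorem stmt0 {C D : Type*} [Category C] [Category D]
    (F : C ⥤ D) (G : D ⥤ C) (adj : F ⊣ G)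
    [(F ⋙ G).IsEquivalence] : F.Full ∧ F.Faithful := by
  have : IsIso adj.unit := by
    have : ∀ X : C, IsIso (adj.unit.app X) := by
      intro X
      set T := F ⋙ G
      set μ : T.obj (T.obj X) ⟶ T.obj X := G.map (adj.counit.app (F.obj X)) with hμ
      set ν : T.obj X ⟶ X := T.preimage μ with hν
      have hTν : T.map ν = μ := T.map_preimage μ
      refine ⟨ν, ?_, ?_⟩
      · apply T.map_injective
        rw [Functor.map_comp, hTν, T.map_id]
        have := congrArg G.map (adj.left_triangle_components X)
        rw [G.map_comp] at this
        simp at this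
        exact this
      · have hnat := adj.unit.naturality ν
        simp only [Functor.id_map] at hnat
        rw [hnat, hTν]
        exact adj.right_triangle_components (F.obj X)
    exact NatIso.isIso_of_isIso_app _
  have ff := adj.fullyFaithfulLOfIsIsoUnit
  exact ⟨ff.full, ff.faithful⟩
end

section
/- Let M be a monoid object in a monoidal category such that the underlying object of M is invertible with respect to the tensor product (i.e., there exists an object M' with M ⊗ M' ≅ 𝟙 and M' ⊗ M ≅ 𝟙, compatibly). Then the unit map η : 𝟙 → M of the monoid structure is an isomorphism. -/
open CategoryTheory MonoidalCategory

/-- If `M` is a monoid object in a monoidal category whose underlying object is invertible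
with respect to the tensor product (i.e. the functor `M ⊗ (-)` is an equivalence), then the
unit map `η : 𝟙 → M` is an isomorphism. -/
theorem stmt1 {C : Type*} [Category C] [MonoidalCategory C]
    (M : Mon C) [(tensorLeft M.X).IsEquivalence] : IsIso (MonObj.one (X := M.X)) := by
  -- candidate inverse of `M.X ◁ (MonObj.one (X := M.X))`
  set i : M.X ⊗ M.X ⟶ M.X ⊗ 𝟙_ C := (MonObj.mul (X := M.X)) ≫ (ρ_ M.X).inv with hi
  have h1 : (M.X ◁ (MonObj.one (X := M.X))) ≫ i = 𝟙 _ := by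
    rw [hi, ← Category.assoc, MonObj.mul_one]
    simp
  -- the other composite, shown to be the identity using fullness/faithfulness
  obtain ⟨g, hg⟩ := (tensorLeft M.X).map_surjective
    (show M.X ⊗ M.X ⟶ M.X ⊗ M.X from i ≫ (M.X ◁ (MonObj.one (X := M.X))))
  have hg' : M.X ◁ g = i ≫ (M.X ◁ (MonObj.one (X := M.X))) := hg
  have hlam : (λ_ M.X).hom ≫ g = (λ_ M.X).hom := by
    have hex : (𝟙_ C ◁ g) ≫ ((MonObj.one (X := M.X)) ▷ M.X) = ((MonObj.one (X := M.X)) ▷ M.X) ≫ (M.X ◁ g) :=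
      whisker_exchange (MonObj.one (X := M.X)) g
    calc (λ_ M.X).hom ≫ g = (𝟙_ C ◁ g) ≫ (λ_ M.X).hom := by
            rw [MonoidalCategory.leftUnitor_naturality]
      _ = (𝟙_ C ◁ g) ≫ ((MonObj.one (X := M.X)) ▷ M.X) ≫ (MonObj.mul (X := M.X)) := by rw [MonObj.one_mul]
      _ = (((MonObj.one (X := M.X)) ▷ M.X) ≫ (M.X ◁ g)) ≫ (MonObj.mul (X := M.X)) := by
            rw [← Category.assoc, hex]
      _ = ((MonObj.one (X := M.X)) ▷ M.X) ≫ (i ≫ (M.X ◁ (MonObj.one (X := M.X)))) ≫ (MonObj.mul (X := M.X)) := by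
            rw [hg', Category.assoc]
      _ = ((MonObj.one (X := M.X)) ▷ M.X) ≫ (MonObj.mul (X := M.X)) ≫ (ρ_ M.X).inv ≫ (ρ_ M.X).hom := by
            rw [hi]
            simp only [Category.assoc, MonObj.mul_one]
      _ = (λ_ M.X).hom := by simp [MonObj.one_mul]
  have hgid : g = 𝟙 M.X := by
    rw [← cancel_epi (λ_ M.X).hom, Category.comp_id]
    exact hlam
  have h2 : i ≫ (M.X ◁ (MonObj.one (X := M.X))) = 𝟙 _ := by
    rw [← hg', hgid, MonoidalCategory.whiskerLeft_id]
  have : IsIso (M.X ◁ (MonObj.one (X := M.X))) := ⟨i, h1, h2⟩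
  have : IsIso ((tensorLeft M.X).map (MonObj.one (X := M.X))) := this
  exact isIso_of_reflects_iso (MonObj.one (X := M.X)) (tensorLeft M.X)
end

section
/- Let R be a commutative ring whose multiplication map R ⊗_ℤ R → R is bijective (R is a 'solid ring'). Then for any commutative ring S, any two ring homomorphisms R → S are equal. -/
open TensorProduct

/-- If `R` is a solid commutative ring (the multiplication map `R ⊗[ℤ] R → R` is bijective),
then any two ring homomorphisms from `R` to any commutative ring `S` are equal. -/
theorem stmt2 {R : Type*} [CommRing R]
    (h : Function.Bijective (LinearMap.mul' ℤ R))
    (S : Type*) [CommRing S] (f g : R →+* S) : f = g := by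
  ext r
  have key : (r ⊗ₜ[ℤ] (1 : R)) = ((1 : R) ⊗ₜ[ℤ] r) := by
    apply h.injective
    simp [LinearMap.mul'_apply]
  have := congrArg (Algebra.TensorProduct.lift f.toIntAlgHom g.toIntAlgHom
    (fun x y => mul_comm _ _)) key
  change f.toIntAlgHom r * g.toIntAlgHom 1 = f.toIntAlgHom 1 * g.toIntAlgHom r at this
  simpa [Algebra.TensorProduct.lift_tmul] using this
end

section
/- Let R and S be commutative rings that are solid, i.e., their multiplication maps R ⊗_ℤ R → R and S ⊗_ℤ S → S are bijective. Then R ⊗_ℤ S is solid: its multiplication map (R ⊗_ℤ S) ⊗_ℤ (R ⊗_ℤ S) → R ⊗_ℤ S is bijective. -/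
open TensorProduct

/-- If `R` and `S` are solid commutative rings, then so is `R ⊗[ℤ] S`. -/
theorem stmt3 {R S : Type*} [CommRing R] [CommRing S]
    (hR : Function.Bijective (LinearMap.mul' ℤ R))
    (hS : Function.Bijective (LinearMap.mul' ℤ S)) :
    Function.Bijective (LinearMap.mul' ℤ (R ⊗[ℤ] S)) := by
  have key : LinearMap.mul' ℤ (R ⊗[ℤ] S) =
      (TensorProduct.map (LinearMap.mul' ℤ R) (LinearMap.mul' ℤ S)).comp
        (TensorProduct.tensorTensorTensorComm ℤ R S R S).toLinearMap := by
    ext a b c d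
    exact Algebra.TensorProduct.tmul_mul_tmul a c b d
  rw [key]
  have hmap : Function.Bijective
      (TensorProduct.map (LinearMap.mul' ℤ R) (LinearMap.mul' ℤ S)) := by
    have : TensorProduct.map (LinearMap.mul' ℤ R) (LinearMap.mul' ℤ S) =
        (TensorProduct.congr (LinearEquiv.ofBijective _ hR)
          (LinearEquiv.ofBijective _ hS)).toLinearMap := rfl
    rw [this]
    exact (TensorProduct.congr _ _).bijective
  exact hmap.comp (TensorProduct.tensorTensorTensorComm ℤ R S R S).bijective
end

section
/- Let R and S be commutative rings that are solid (their multiplication maps R ⊗_ℤ R → R and S ⊗_ℤ S → S are bijective), and suppose R ⊗_ℤ S is the zero ring. Then the product ring R × S is solid: its multiplication map (R × S) ⊗_ℤ (R × S) → R × S is bijective. -/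
open TensorProduct

/-- If `R` and `S` are solid commutative rings and `R ⊗[ℤ] S` is the zero ring, then the
product ring `R × S` is solid. -/
theorem stmt4 {R S : Type*} [CommRing R] [CommRing S]
    (hR : Function.Bijective (LinearMap.mul' ℤ R))
    (hS : Function.Bijective (LinearMap.mul' ℤ S))
    (h0 : Subsingleton (R ⊗[ℤ] S)) :
    Function.Bijective (LinearMap.mul' ℤ (R × S)) := by
  have hSR : Subsingleton (S ⊗[ℤ] R) := (TensorProduct.comm ℤ S R).toEquiv.subsingleton
  -- cross tensors vanish
  have cross1 : ∀ (a : R) (d : S),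
      (((a, (0:S)) : R × S) ⊗ₜ[ℤ] (((0:R), d) : R × S)) = 0 := by
    intro a d
    have h : (((a, (0:S)) : R × S) ⊗ₜ[ℤ] (((0:R), d) : R × S)) =
        TensorProduct.map (LinearMap.inl ℤ R S) (LinearMap.inr ℤ R S) (a ⊗ₜ[ℤ] d) := rfl
    rw [h, Subsingleton.elim (a ⊗ₜ[ℤ] d) 0, map_zero]
  have cross2 : ∀ (b : S) (c : R),
      ((((0:R), b) : R × S) ⊗ₜ[ℤ] ((c, (0:S)) : R × S)) = 0 := by
    intro b c
    have h : ((((0:R), b) : R × S) ⊗ₜ[ℤ] ((c, (0:S)) : R × S)) =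
        TensorProduct.map (LinearMap.inr ℤ R S) (LinearMap.inl ℤ R S) (b ⊗ₜ[ℤ] c) := rfl
    rw [h, Subsingleton.elim (b ⊗ₜ[ℤ] c) 0, map_zero]
  -- decomposition of a pure tensor
  set A : (R × S) ⊗[ℤ] (R × S) →ₗ[ℤ] (R × S) ⊗[ℤ] (R × S) :=
    TensorProduct.map ((LinearMap.inl ℤ R S).comp (LinearMap.fst ℤ R S))
      ((LinearMap.inl ℤ R S).comp (LinearMap.fst ℤ R S)) with hA
  set B : (R × S) ⊗[ℤ] (R × S) →ₗ[ℤ] (R × S) ⊗[ℤ] (R × S) :=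
    TensorProduct.map ((LinearMap.inr ℤ R S).comp (LinearMap.snd ℤ R S))
      ((LinearMap.inr ℤ R S).comp (LinearMap.snd ℤ R S)) with hB
  have hdecomp : ∀ x : (R × S) ⊗[ℤ] (R × S), A x + B x = x := by
    intro x
    have : A + B = LinearMap.id := by
      apply TensorProduct.ext'
      rintro ⟨a, b⟩ ⟨c, d⟩
      erw [LinearMap.add_apply, hA, hB, TensorProduct.map_tmul, TensorProduct.map_tmul]
      simp only [LinearMap.add_apply, hA, hB, TensorProduct.map_tmul, LinearMap.comp_apply,
        LinearMap.fst_apply, LinearMap.snd_apply, LinearMap.inl_apply, LinearMap.inr_apply,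
        LinearMap.id_apply]
      have expand : (((a, b) : R × S) ⊗ₜ[ℤ] ((c, d) : R × S)) =
          ((a, (0:S)) : R × S) ⊗ₜ[ℤ] ((c, (0:S)) : R × S)
          + ((a, (0:S)) : R × S) ⊗ₜ[ℤ] (((0:R), d) : R × S)
          + (((0:R), b) : R × S) ⊗ₜ[ℤ] ((c, (0:S)) : R × S)
          + (((0:R), b) : R × S) ⊗ₜ[ℤ] (((0:R), d) : R × S) := by
        have h1 : ((a, b) : R × S) = (a, (0:S)) + ((0:R), b) := by simp
        have h2 : ((c, d) : R × S) = (c, (0:S)) + ((0:R), d) := by simp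
        rw [h1, h2, TensorProduct.add_tmul, TensorProduct.tmul_add, TensorProduct.tmul_add]
        ring
      rw [expand, cross1 a d, cross2 b c]
      abel
    have := congrFun (congrArg DFunLike.coe this) x
    simpa using this
  -- commuting lemmas
  have hfst : ∀ x : (R × S) ⊗[ℤ] (R × S),
      (LinearMap.mul' ℤ (R × S) x).1 =
        LinearMap.mul' ℤ R (TensorProduct.map (LinearMap.fst ℤ R S) (LinearMap.fst ℤ R S) x) := by
    intro x
    induction x using TensorProduct.induction_on with
    | zero => simp
    | tmul a b => simp [LinearMap.mul'_apply]
    | add x y hx hy => simp only [map_add, Prod.fst_add, hx, hy]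
  have hsnd : ∀ x : (R × S) ⊗[ℤ] (R × S),
      (LinearMap.mul' ℤ (R × S) x).2 =
        LinearMap.mul' ℤ S (TensorProduct.map (LinearMap.snd ℤ R S) (LinearMap.snd ℤ R S) x) := by
    intro x
    induction x using TensorProduct.induction_on with
    | zero => simp
    | tmul a b => simp [LinearMap.mul'_apply]
    | add x y hx hy => simp only [map_add, Prod.snd_add, hx, hy]
  have e1 : ∀ x : R ⊗[ℤ] R, LinearMap.mul' ℤ (R × S)
      (TensorProduct.map (LinearMap.inl ℤ R S) (LinearMap.inl ℤ R S) x)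
        = ((LinearMap.mul' ℤ R x : R), (0:S)) := by
    intro x
    induction x using TensorProduct.induction_on with
    | zero => simp; rfl
    | tmul a b =>
      simp only [TensorProduct.map_tmul, LinearMap.mul'_apply, LinearMap.inl_apply]
      ext <;> simp
    | add x y hx hy => simp [map_add, hx, hy]
  have e2 : ∀ y : S ⊗[ℤ] S, LinearMap.mul' ℤ (R × S)
      (TensorProduct.map (LinearMap.inr ℤ R S) (LinearMap.inr ℤ R S) y)
        = ((0:R), (LinearMap.mul' ℤ S y : S)) := by
    intro y
    induction y using TensorProduct.induction_on with
    | zero => simp; rfl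
    | tmul a b =>
      simp only [TensorProduct.map_tmul, LinearMap.mul'_apply, LinearMap.inr_apply]
      ext <;> simp
    | add x y hx hy => simp [map_add, hx, hy]
  constructor
  · -- injective
    rw [injective_iff_map_eq_zero]
    intro x hx
    have h1 : TensorProduct.map (LinearMap.fst ℤ R S) (LinearMap.fst ℤ R S) x = 0 := by
      apply hR.injective
      rw [map_zero, ← hfst, hx, Prod.fst_zero]
    have h2 : TensorProduct.map (LinearMap.snd ℤ R S) (LinearMap.snd ℤ R S) x = 0 := by
      apply hS.injective
      rw [map_zero, ← hsnd, hx, Prod.snd_zero]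
    have hAx : A x = 0 := by
      rw [hA, TensorProduct.map_comp]; erw [LinearMap.comp_apply, h1, map_zero]
    have hBx : B x = 0 := by
      rw [hB, TensorProduct.map_comp]; erw [LinearMap.comp_apply, h2, map_zero]
    rw [← hdecomp x, hAx, hBx, add_zero]
  · -- surjective
    rintro ⟨r, s⟩
    obtain ⟨x, hx⟩ := hR.surjective r
    obtain ⟨y, hy⟩ := hS.surjective s
    refine ⟨TensorProduct.map (LinearMap.inl ℤ R S) (LinearMap.inl ℤ R S) x
      + TensorProduct.map (LinearMap.inr ℤ R S) (LinearMap.inr ℤ R S) y, ?_⟩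
    rw [map_add, e1, e2, hx, hy]
    simp
end

section
/- Let φ : ℤ_p → ℤ_p be an additive group homomorphism that vanishes on the subring ℤ_(p) ⊆ ℤ_p (the p-local integers, i.e., all elements of ℤ_p lying in the image of the localization of ℤ at p; it suffices that φ vanishes on ℤ). If φ vanishes on ℤ_(p), then φ = 0. (Key steps: the quotient ℤ_p/ℤ_(p) is p-divisible, and any additive map from a p-divisible group to ℤ_p is zero since ℤ_p is p-adically separated.) -/
/-- If an additive group homomorphism `φ : ℤ_p → ℤ_p` vanishes on the subring `ℤ_(p)` of
`p`-local integers (all `x` with `b * x = a` for integers `a, b` with `b` prime to `p`),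
then `φ = 0`. -/
theorem stmt6 (p : ℕ) [Fact p.Prime] (φ : ℤ_[p] →+ ℤ_[p])
    (h : ∀ (x : ℤ_[p]) (a b : ℤ), ¬ (p : ℤ) ∣ b → (b : ℤ_[p]) * x = (a : ℤ_[p]) → φ x = 0) :
    φ = 0 := by
  have hp : 1 < p := (Fact.out : p.Prime).one_lt
  ext x
  simp only [AddMonoidHom.zero_apply]
  have hx : ∀ n : ℕ, φ x ∈ Ideal.span {(p : ℤ_[p]) ^ n} := by
    intro n
    have hs := PadicInt.appr_spec n x
    rw [Ideal.mem_span_singleton] at hs ⊢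
    obtain ⟨y, hy⟩ := hs
    have ha : φ ((x.appr n : ℤ_[p])) = 0 := by
      refine h _ (x.appr n) 1 ?_ (by push_cast; ring)
      intro hd
      have := Int.le_of_dvd one_pos hd
      omega
    have hxy : φ x = φ (x - x.appr n) := by
      rw [map_sub, ha, sub_zero]
    rw [hxy, hy]
    have : (p : ℤ_[p]) ^ n * y = ((p ^ n : ℕ) : ℤ_[p]) * y := by push_cast; ring
    rw [this, ← nsmul_eq_mul, map_nsmul, nsmul_eq_mul]
    exact ⟨φ y, by push_cast; ring⟩
  have hnorm : ∀ n : ℕ, ‖φ x‖ ≤ (p : ℝ) ^ (-(n : ℤ)) := fun n =>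
    (PadicInt.norm_le_pow_iff_mem_span_pow _ _).mpr (hx n)
  have hp1 : (1 : ℝ) < p := by exact_mod_cast hp
  by_contra hne
  have hpos : 0 < ‖φ x‖ := by
    simpa [norm_pos_iff] using hne
  obtain ⟨n, hn⟩ := exists_pow_lt_of_lt_one hpos (by
    rw [one_div]; exact inv_lt_one_of_one_lt₀ hp1 : (1 / (p : ℝ)) < 1)
  have := hnorm n
  rw [zpow_neg, zpow_natCast, ← one_div] at this
  rw [div_pow, one_pow] at hn
  exact absurd (this.trans_lt hn) (lt_irrefl _)
end

section
/- Let p be a prime and let δ : ℤ_p → ℤ_p be a function satisfying δ(a + b) = δ(a) + δ(b) + (a^p + b^p − (a+b)^p)/p for all a, b ∈ ℤ_p, and δ(n) = (n − n^p)/p for all n ∈ ℤ. Then δ(a) = (a − a^p)/p for all a ∈ ℤ_p. -/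
/-- An additive `p`-derivation `δ` on `ℤ_p` (satisfying
`δ(a+b) = δ a + δ b + (a^p + b^p - (a+b)^p)/p` and `δ n = (n - n^p)/p` for integers `n`)
is given by `δ a = (a - a^p)/p` for all `a ∈ ℤ_p`.  (Divisions by `p` are expressed by
multiplying both sides by `p`, which is a nonzerodivisor of `ℤ_p`.) -/
theorem stmt7 (p : ℕ) [Fact p.Prime] (δ : ℤ_[p] → ℤ_[p])
    (hadd : ∀ a b : ℤ_[p],
      (p : ℤ_[p]) * δ (a + b) = (p : ℤ_[p]) * δ a + (p : ℤ_[p]) * δ b +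
        (a ^ p + b ^ p - (a + b) ^ p))
    (hint : ∀ n : ℤ, (p : ℤ_[p]) * δ (n : ℤ_[p]) = (n : ℤ_[p]) - (n : ℤ_[p]) ^ p) :
    ∀ a : ℤ_[p], (p : ℤ_[p]) * δ a = a - a ^ p := by
  set f : ℤ_[p] → ℤ_[p] := fun a => (p : ℤ_[p]) * δ a - (a - a ^ p) with hf
  have hf_add : ∀ a b : ℤ_[p], f (a + b) = f a + f b := by
    intro a b
    simp only [hf, hadd a b]
    ring
  have hf_int : ∀ n : ℤ, f (n : ℤ_[p]) = 0 := by
    intro n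
    simp only [hf, hint n, sub_self]
  have hf_zero : f 0 = 0 := by
    have := hf_int 0
    simpa using this
  have hf_nsmul : ∀ (k : ℕ) (b : ℤ_[p]), f (k • b) = k • f b := by
    intro k b
    induction k with
    | zero => simpa using hf_zero
    | succ n ih =>
      rw [succ_nsmul, succ_nsmul, hf_add, ih]
  -- show f a = 0 for all a
  have key : ∀ a : ℤ_[p], f a = 0 := by
    intro a
    have hle : ∀ n : ℕ, ‖f a‖ ≤ ((p : ℝ)⁻¹) ^ n := by
      intro n
      obtain ⟨c, hc⟩ := Ideal.mem_span_singleton'.1 (PadicInt.appr_spec n a)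
      -- a = appr + p^n * c  (hc : c * p^n = a - appr)
      have ha : a = (PadicInt.appr a n : ℤ_[p]) + (p : ℤ_[p]) ^ n * c := by
        rw [mul_comm]
        rw [hc]; ring
      have h1 : f a = (p : ℤ_[p]) ^ n * f c := by
        have hcast : ((PadicInt.appr a n : ℤ) : ℤ_[p]) = (PadicInt.appr a n : ℤ_[p]) := by
          push_cast; ring
        have h2 : (p : ℤ_[p]) ^ n * c = (p ^ n : ℕ) • c := by
          simp [nsmul_eq_mul]
        calc f a = f ((PadicInt.appr a n : ℤ_[p]) + (p : ℤ_[p]) ^ n * c) := by rw [← ha]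
          _ = f ((PadicInt.appr a n : ℤ_[p])) + f ((p : ℤ_[p]) ^ n * c) := hf_add _ _
          _ = f ((p : ℤ_[p]) ^ n * c) := by
              rw [← hcast, hf_int]; ring
          _ = (p ^ n : ℕ) • f c := by rw [h2, hf_nsmul]
          _ = (p : ℤ_[p]) ^ n * f c := by simp [nsmul_eq_mul]
      rw [h1]
      have hnorm : ‖(p : ℤ_[p]) ^ n * f c‖ ≤ ‖(p : ℤ_[p])‖ ^ n * 1 := by
        rw [norm_mul, norm_pow]
        exact mul_le_mul_of_nonneg_left (PadicInt.norm_le_one _) (by positivity)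
      calc ‖(p : ℤ_[p]) ^ n * f c‖ ≤ ‖(p : ℤ_[p])‖ ^ n * 1 := hnorm
        _ = ((p : ℝ)⁻¹) ^ n := by
            rw [mul_one, PadicInt.norm_p]
    have hp1 : (1 : ℝ) < (p : ℝ) := by
      exact_mod_cast (Fact.out : p.Prime).one_lt
    have htend : Filter.Tendsto (fun n : ℕ => ((p : ℝ)⁻¹) ^ n) Filter.atTop (nhds 0) := by
      apply tendsto_pow_atTop_nhds_zero_of_lt_one
      · positivity
      · rw [inv_lt_one_iff₀]; right; exact hp1
    have : ‖f a‖ ≤ 0 := ge_of_tendsto' htend hle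
    have : ‖f a‖ = 0 := le_antisymm this (norm_nonneg _)
    exact norm_eq_zero.mp this
  intro a
  have := key a
  simp only [hf] at this
  linear_combination this
end
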